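/- Let w be a permutation of {1,…,n} with shape α. Then there exist unique permutations u and v of {1,…,n} such that w = u·e_α·v with inv(w) = inv(u) + inv(e_α) + inv(v); moreover, for these u and v one has Φ(w) = u·e_α and Φ_inv(w) = e_α·v. -/

import Mathlib

open scoped Classical

noncomputable section

namespace RajRegularity

variable {n : ℕ}

/-- Maximal length of an increasing subsequence of `w(i), …, w(n)` beginning with `w(i)`:
the largest cardinality of a set `s` of positions that contains `i`, consists of positions
`≥ i`, and on which `w` is strictly increasing. -/
def lisFrom (w : Equiv.Perm (Fin n)) (i : Fin n) : ℕ :=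
  (Finset.univ.filter fun s : Finset (Fin n) =>
      i ∈ s ∧ (∀ j ∈ s, i ≤ j) ∧ ∀ j ∈ s, ∀ k ∈ s, j < k → w j < w k).sup Finset.card

/-- `rajCode w i = (n − i + 1) −` (maximal length of an increasing subsequence of
`w(i), …, w(n)` beginning with `w(i)`); here positions are 0-based, so the number of
positions `≥ i` is `n - i`. -/
def rajCode (w : Equiv.Perm (Fin n)) (i : Fin n) : ℕ :=
  (n - (i : ℕ)) - lisFrom w i

/-- The Rajchgot index `raj w = Σᵢ rajCode w i`. -/
def raj (w : Equiv.Perm (Fin n)) : ℕ := ∑ i, rajCode w i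

/-- The number of inversions of `w`: pairs of positions `i < j` with `w i > w j`. -/
def invNum (w : Equiv.Perm (Fin n)) : ℕ :=
  (Finset.univ.filter fun p : Fin n × Fin n => p.1 < p.2 ∧ w p.2 < w p.1).card

/-- The `i`-th entry of the inv code: `ℓ_i(w) = #{ j : i < j, w j < w i }`. -/
def ellCode (w : Equiv.Perm (Fin n)) (i : Fin n) : ℕ :=
  (Finset.univ.filter fun j : Fin n => i < j ∧ w j < w i).card

/-- The set of descent positions of `w` (0-based position `j` with `w j > w (j+1)`). -/
def descents (w : Equiv.Perm (Fin n)) : Finset (Fin n) :=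
  Finset.univ.filter fun j : Fin n =>
    if h : (j : ℕ) + 1 < n then w ⟨(j : ℕ) + 1, h⟩ < w j else False

/-- The major index: the sum of the (1-based) descent positions of `w`. -/
def maj (w : Equiv.Perm (Fin n)) : ℕ := ∑ j ∈ descents w, ((j : ℕ) + 1)

/-- `mCode w i`: the number of descents of `w` at positions `≥ i`. -/
def mCode (w : Equiv.Perm (Fin n)) (i : Fin n) : ℕ :=
  ((descents w).filter fun j => i ≤ j).card

/-- `w` is dominant iff it avoids the pattern 132. -/
def Dominant (w : Equiv.Perm (Fin n)) : Prop :=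
  ¬ ∃ i j k : Fin n, i < j ∧ j < k ∧ w i < w k ∧ w k < w j

/-- `w` is fireworks iff there are no positions `i < j` with `w j < w (j+1) < w i`. -/
def Fireworks (w : Equiv.Perm (Fin n)) : Prop :=
  ¬ ∃ (i j : Fin n) (h : (j : ℕ) + 1 < n),
      i < j ∧ w j < w ⟨(j : ℕ) + 1, h⟩ ∧ w ⟨(j : ℕ) + 1, h⟩ < w i

/-- `w` is inverse fireworks iff `w⁻¹` is fireworks. -/
def InvFireworks (w : Equiv.Perm (Fin n)) : Prop := Fireworks w⁻¹

/-- `w` is a valley permutation: for some `a`, it is strictly decreasing on positions `≤ a`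
and strictly increasing on positions `≥ a`. -/
def Valley (w : Equiv.Perm (Fin n)) : Prop :=
  ∃ a : ℕ, (∀ i j : Fin n, i < j → (j : ℕ) ≤ a → w j < w i) ∧
    ∀ i j : Fin n, a ≤ (i : ℕ) → i < j → w i < w j

/-- `eps w i` is the (1-based) blob index `ε_i(w) = i + r_i(w)`. -/
def eps (w : Equiv.Perm (Fin n)) (i : Fin n) : ℕ := (i : ℕ) + 1 + rajCode w i

/-- The shape of `w`: `α_k(w) = #{ i : ε_i(w) = k }` (here `k : Fin n` stands for the
1-based index `k + 1`). -/
def shape (w : Equiv.Perm (Fin n)) : Fin n → ℕ := fun k =>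
  (Finset.univ.filter fun i : Fin n => eps w i = (k : ℕ) + 1).card

/-- Dominance order on shapes: `α ⪰ β` iff every tail sum of `α` is at least the
corresponding tail sum of `β`. -/
def Dominates (α β : Fin n → ℕ) : Prop :=
  ∀ m : Fin n,
    ∑ k ∈ Finset.univ.filter (fun k : Fin n => m ≤ k), β k ≤
      ∑ k ∈ Finset.univ.filter (fun k : Fin n => m ≤ k), α k

/-- Right weak order: `u ≤_R w` iff `w = u * v` length-additively. -/
def leR (u w : Equiv.Perm (Fin n)) : Prop :=
  ∃ v : Equiv.Perm (Fin n), w = u * v ∧ invNum w = invNum u + invNum v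

/-- Left weak order: `u ≤_L w` iff `w = v * u` length-additively. -/
def leL (u w : Equiv.Perm (Fin n)) : Prop :=
  ∃ v : Equiv.Perm (Fin n), w = v * u ∧ invNum w = invNum v + invNum u

/-- Two-sided weak order: the transitive closure of the union of left and right weak
orders (both are reflexive, so we may use the reflexive-transitive closure). -/
def leLR (u w : Equiv.Perm (Fin n)) : Prop :=
  Relation.ReflTransGen (fun a b : Equiv.Perm (Fin n) => leL a b ∨ leR a b) u w

/-- The maximum of the block of the set partition `π(w)` containing the value `v`;
the block of `v` is `{ v' : ε_{w⁻¹ v'}(w) = ε_{w⁻¹ v}(w) }`. -/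
def blockMax (w : Equiv.Perm (Fin n)) (v : Fin n) : ℕ :=
  ((Finset.univ.filter fun v' : Fin n => eps w (w⁻¹ v') = eps w (w⁻¹ v)).max'
      ⟨v, Finset.mem_filter.mpr ⟨Finset.mem_univ v, rfl⟩⟩).val

/-- The fireworks map `Φ`: the one-line word of `Φ w` lists the blocks of `π(w)` in
increasing order of their maxima, each block written in decreasing order.  Equivalently,
`Φ w` sorts the values by the key (max of block, value reversed), lexicographically. -/
def Phi (w : Equiv.Perm (Fin n)) : Equiv.Perm (Fin n) :=
  Tuple.sort fun v : Fin n => n * blockMax w v + (n - 1 - (v : ℕ))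

/-- The inverse fireworks map `Φ_inv w = Φ(w⁻¹)⁻¹`. -/
def PhiInv (w : Equiv.Perm (Fin n)) : Equiv.Perm (Fin n) := (Phi w⁻¹)⁻¹

/-- Partial sums of a sequence of block sizes. -/
def psum (a : ℕ → ℕ) (m : ℕ) : ℕ := ∑ j ∈ Finset.range m, a j

/-- The index of the block (interval `[psum a m, psum a (m+1))`) containing the value `v`. -/
def blockIdx (n : ℕ) (a : ℕ → ℕ) (v : Fin n) : ℕ :=
  ((Finset.range n).filter fun m => psum a (m + 1) ≤ (v : ℕ)).card

/-- The layered permutation with block sizes `a 0, a 1, …`: it reverses each of the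
consecutive intervals `[psum a m, psum a (m+1))` of `{0, …, n-1}`.  Equivalently, its
one-line word sorts the values by (block index, value reversed) lexicographically. -/
def layered (n : ℕ) (a : ℕ → ℕ) : Equiv.Perm (Fin n) :=
  Tuple.sort fun v : Fin n => n * blockIdx n a v + (n - 1 - (v : ℕ))

/-- The layered permutation `e_α` associated to a shape `α : Fin n → ℕ`. -/
def eOf (α : Fin n → ℕ) : Equiv.Perm (Fin n) :=
  layered n fun m => if h : m < n then α ⟨m, h⟩ else 0

-- AUX START

lemma Equiv.Perm.apply_inv_self {α : Type*} (f : Equiv.Perm α) (x : α) : f (f⁻¹ x) = x :=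
  f.apply_symm_apply x

lemma Equiv.Perm.inv_apply_self {α : Type*} (f : Equiv.Perm α) (x : α) : f⁻¹ (f x) = x :=
  f.symm_apply_apply x

def chainSets (w : Equiv.Perm (Fin n)) (i : Fin n) : Finset (Finset (Fin n)) :=
  Finset.univ.filter fun s : Finset (Fin n) =>
      i ∈ s ∧ (∀ j ∈ s, i ≤ j) ∧ ∀ j ∈ s, ∀ k ∈ s, j < k → w j < w k

lemma mem_chainSets {w : Equiv.Perm (Fin n)} {i : Fin n} {s : Finset (Fin n)} :
    s ∈ chainSets w i ↔ i ∈ s ∧ (∀ j ∈ s, i ≤ j) ∧ ∀ j ∈ s, ∀ k ∈ s, j < k → w j < w k := by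
  simp [chainSets]

lemma lisFrom_eq_sup (w : Equiv.Perm (Fin n)) (i : Fin n) :
    lisFrom w i = (chainSets w i).sup Finset.card := rfl

lemma le_lisFrom_of_mem {w : Equiv.Perm (Fin n)} {i : Fin n} {s : Finset (Fin n)}
    (hs : s ∈ chainSets w i) : s.card ≤ lisFrom w i := Finset.le_sup hs

lemma singleton_mem_chainSets (w : Equiv.Perm (Fin n)) (i : Fin n) :
    ({i} : Finset (Fin n)) ∈ chainSets w i := by
  rw [mem_chainSets]
  refine ⟨Finset.mem_singleton_self i, ?_, ?_⟩
  · intro j hj; rw [Finset.mem_singleton] at hj; exact hj ▸ le_refl i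
  · intro j hj k hk hjk
    rw [Finset.mem_singleton] at hj hk
    subst hj; subst hk; exact absurd hjk (lt_irrefl _)

lemma one_le_lisFrom (w : Equiv.Perm (Fin n)) (i : Fin n) : 1 ≤ lisFrom w i := by
  have := le_lisFrom_of_mem (singleton_mem_chainSets w i)
  simpa using this

lemma lisFrom_le (w : Equiv.Perm (Fin n)) (i : Fin n) : lisFrom w i ≤ n - (i : ℕ) := by
  rw [lisFrom_eq_sup]
  refine Finset.sup_le fun s hs => ?_
  rw [mem_chainSets] at hs
  have : s ⊆ Finset.Ici i := fun j hj => Finset.mem_Ici.mpr (hs.2.1 j hj)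
  calc s.card ≤ (Finset.Ici i).card := Finset.card_le_card this
    _ = n - (i : ℕ) := Fin.card_Ici i

lemma exists_chain (w : Equiv.Perm (Fin n)) (i : Fin n) :
    ∃ s ∈ chainSets w i, s.card = lisFrom w i := by
  obtain ⟨s, hs, h⟩ := Finset.exists_mem_eq_sup (chainSets w i)
    ⟨{i}, singleton_mem_chainSets w i⟩ Finset.card
  exact ⟨s, hs, h.symm⟩

/-- L2 -/
lemma lisFrom_succ_le {w : Equiv.Perm (Fin n)} {i j : Fin n} (hij : i < j) (hw : w i < w j) :
    lisFrom w j + 1 ≤ lisFrom w i := by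
  obtain ⟨s, hs, hcard⟩ := exists_chain w j
  rw [mem_chainSets] at hs
  have hi : i ∉ s := fun h => absurd (hs.2.1 i h) (not_le.mpr hij)
  have : insert i s ∈ chainSets w i := by
    rw [mem_chainSets]
    refine ⟨Finset.mem_insert_self i s, ?_, ?_⟩
    · intro k hk
      rcases Finset.mem_insert.mp hk with h | h
      · exact h ▸ le_refl i
      · exact le_trans hij.le (hs.2.1 k h)
    · intro a ha b hb hab
      rcases Finset.mem_insert.mp ha with h | h <;> rcases Finset.mem_insert.mp hb with h' | h'
      · subst h; subst h'; exact absurd hab (lt_irrefl _)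
      · subst h
        rcases eq_or_lt_of_le (hs.2.1 b h') with h'' | h''
        · exact h'' ▸ hw
        · exact lt_trans hw (hs.2.2 j hs.1 b h' h'')
      · subst h'; exact absurd (le_trans hij.le (hs.2.1 a h)) (not_le.mpr hab)
      · exact hs.2.2 a h b h' hab
  have := le_lisFrom_of_mem this
  rwa [Finset.card_insert_of_notMem hi, hcard] at this

/-- decrease within a level -/
lemma same_level_lt {w : Equiv.Perm (Fin n)} {i j : Fin n} (hij : i < j)
    (h : lisFrom w i = lisFrom w j) : w j < w i := by
  rcases lt_trichotomy (w i) (w j) with h' | h' | h'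
  · have := lisFrom_succ_le hij h'; omega
  · exact absurd (w.injective h') (ne_of_lt hij)
  · exact h'

/-- L3 -/
lemma exists_next {w : Equiv.Perm (Fin n)} {i : Fin n} (h2 : 2 ≤ lisFrom w i) :
    ∃ j, i < j ∧ w i < w j ∧ lisFrom w j = lisFrom w i - 1 := by
  obtain ⟨s, hs, hcard⟩ := exists_chain w i
  rw [mem_chainSets] at hs
  have hne : (s.erase i).Nonempty := by
    rw [← Finset.card_pos, Finset.card_erase_of_mem hs.1]; omega
  set j := (s.erase i).min' hne with hj
  have hjs : j ∈ s.erase i := Finset.min'_mem _ _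
  have hjs' : j ∈ s := Finset.mem_of_mem_erase hjs
  have hij : i < j := lt_of_le_of_ne (hs.2.1 j hjs') (Ne.symm (Finset.ne_of_mem_erase hjs))
  have hwij : w i < w j := hs.2.2 i hs.1 j hjs' hij
  refine ⟨j, hij, hwij, ?_⟩
  have h1 : lisFrom w j + 1 ≤ lisFrom w i := lisFrom_succ_le hij hwij
  have h2' : s.card - 1 ≤ lisFrom w j := by
    have : s.erase i ∈ chainSets w j := by
      rw [mem_chainSets]
      refine ⟨hjs, fun k hk => Finset.min'_le _ _ hk, ?_⟩
      intro a ha b hb hab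
      exact hs.2.2 a (Finset.mem_of_mem_erase ha) b (Finset.mem_of_mem_erase hb) hab
    have := le_lisFrom_of_mem this
    rwa [Finset.card_erase_of_mem hs.1] at this
  omega

/-- L4 direction -/
lemma lisFrom_inv_ge (w : Equiv.Perm (Fin n)) (i : Fin n) :
    lisFrom w i ≤ lisFrom w⁻¹ (w i) := by
  obtain ⟨s, hs, hcard⟩ := exists_chain w i
  rw [mem_chainSets] at hs
  have : s.image w ∈ chainSets w⁻¹ (w i) := by
    rw [mem_chainSets]
    refine ⟨Finset.mem_image_of_mem w hs.1, ?_, ?_⟩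
    · intro b hb
      obtain ⟨k, hk, rfl⟩ := Finset.mem_image.mp hb
      rcases eq_or_lt_of_le (hs.2.1 k hk) with h | h
      · exact (h ▸ le_refl _)
      · exact (hs.2.2 i hs.1 k hk h).le
    · intro b hb b' hb' hbb'
      obtain ⟨k, hk, rfl⟩ := Finset.mem_image.mp hb
      obtain ⟨k', hk', rfl⟩ := Finset.mem_image.mp hb'
      simp only [Equiv.Perm.inv_apply_self]
      rcases lt_trichotomy k k' with h | h | h
      · exact h
      · subst h; exact absurd hbb' (lt_irrefl _)
      · exact absurd (hs.2.2 k' hk' k hk h) (not_lt.mpr hbb'.le)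
  have := le_lisFrom_of_mem this
  rwa [Finset.card_image_of_injective s w.injective, hcard] at this

lemma lisFrom_inv (w : Equiv.Perm (Fin n)) (i : Fin n) :
    lisFrom w⁻¹ (w i) = lisFrom w i := by
  refine le_antisymm ?_ (lisFrom_inv_ge w i)
  have := lisFrom_inv_ge w⁻¹ (w i)
  simpa using this


-- STAGE2
/-- level of the value `v` of `w` -/
def lev (w : Equiv.Perm (Fin n)) (v : Fin n) : ℕ := lisFrom w (w⁻¹ v)

def cpos (w : Equiv.Perm (Fin n)) (t : ℕ) : ℕ :=
  (Finset.univ.filter fun i : Fin n => t ≤ lisFrom w i).card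

lemma lev_apply (w : Equiv.Perm (Fin n)) (i : Fin n) : lev w (w i) = lisFrom w i := by
  simp [lev]

lemma one_le_lev (w : Equiv.Perm (Fin n)) (v : Fin n) : 1 ≤ lev w v := one_le_lisFrom _ _

lemma lev_le (w : Equiv.Perm (Fin n)) (v : Fin n) : lev w v ≤ n :=
  (lisFrom_le w _).trans (Nat.sub_le _ _)

lemma lisFrom_le_n (w : Equiv.Perm (Fin n)) (i : Fin n) : lisFrom w i ≤ n :=
  (lisFrom_le w _).trans (Nat.sub_le _ _)

lemma card_filter_ext {p q : Fin n → Prop} [DecidablePred p] [DecidablePred q]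
    (h : ∀ i, p i ↔ q i) :
    (Finset.univ.filter p).card = (Finset.univ.filter q).card := by
  congr 1
  exact Finset.filter_congr fun x _ => h x

lemma card_filter_perm (x : Equiv.Perm (Fin n)) (p : Fin n → Prop) [DecidablePred p]
    [DecidablePred fun i => p (x i)] :
    (Finset.univ.filter fun i => p (x i)).card = (Finset.univ.filter fun v => p v).card := by
  apply Finset.card_bij (fun i _ => x i)
  · intro a ha
    simp only [Finset.mem_filter, Finset.mem_univ, true_and] at ha ⊢
    exact ha
  · intro a _ b _ h; exact x.injective h
  · intro b hb
    refine ⟨x⁻¹ b, ?_, by simp⟩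
    simp only [Finset.mem_filter, Finset.mem_univ, true_and] at hb ⊢
    simpa using hb

lemma card_lev_filter (w : Equiv.Perm (Fin n)) (t : ℕ) :
    (Finset.univ.filter fun v : Fin n => t ≤ lev w v).card = cpos w t := by
  rw [cpos]
  calc (Finset.univ.filter fun v : Fin n => t ≤ lev w v).card
      = (Finset.univ.filter fun i : Fin n => t ≤ lisFrom w (w⁻¹ i)).card :=
        card_filter_ext (fun v => Iff.rfl)
    _ = (Finset.univ.filter fun i : Fin n => t ≤ lisFrom w i).card :=
        card_filter_perm w⁻¹ (fun i => t ≤ lisFrom w i)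

lemma mul_step (n a b : ℕ) (hab : a < b) : n * a + n ≤ n * b := by
  calc n * a + n = n * (a + 1) := by ring
    _ ≤ n * b := Nat.mul_le_mul_left n hab

lemma cpos_one (w : Equiv.Perm (Fin n)) : cpos w 1 = n := by
  rw [cpos]
  have : (Finset.univ.filter fun i : Fin n => 1 ≤ lisFrom w i) = Finset.univ := by
    apply Finset.filter_true_of_mem
    intro i _; exact one_le_lisFrom w i
  rw [this, Finset.card_univ, Fintype.card_fin]

lemma cpos_le (w : Equiv.Perm (Fin n)) (t : ℕ) : cpos w t ≤ n := by
  rw [cpos]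
  calc _ ≤ (Finset.univ : Finset (Fin n)).card := Finset.card_le_card (Finset.filter_subset _ _)
    _ = n := by rw [Finset.card_univ, Fintype.card_fin]

lemma cpos_succ (w : Equiv.Perm (Fin n)) (s : ℕ) :
    cpos w s = cpos w (s + 1) + (Finset.univ.filter fun i : Fin n => lisFrom w i = s).card := by
  rw [cpos, cpos, ← Finset.card_union_of_disjoint]
  · congr 1
    ext i
    simp only [Finset.mem_union, Finset.mem_filter, Finset.mem_univ, true_and]
    omega
  · rw [Finset.disjoint_filter]
    intro i _ h h'
    omega

lemma eps_eq (w : Equiv.Perm (Fin n)) (i : Fin n) : eps w i = n + 1 - lisFrom w i := by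
  have h1 := lisFrom_le w i
  have h2 := one_le_lisFrom w i
  have h3 : (i : ℕ) < n := i.isLt
  rw [eps, rajCode]
  omega

lemma shape_eq (w : Equiv.Perm (Fin n)) (k : Fin n) :
    shape w k = (Finset.univ.filter fun i : Fin n => lisFrom w i = n - (k : ℕ)).card := by
  rw [shape]
  congr 1
  apply Finset.filter_congr
  intro i _
  rw [eps_eq]
  have h1 := lisFrom_le_n w i
  have h2 := one_le_lisFrom w i
  have h3 : (k : ℕ) < n := k.isLt
  constructor <;> intro h <;> omega

/-- generic injective key lemmas -/
lemma keyRev_lt_iff (A : Fin n → ℕ) (v v' : Fin n) :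
    n * A v + (n - 1 - (v : ℕ)) < n * A v' + (n - 1 - (v' : ℕ)) ↔
      A v < A v' ∨ (A v = A v' ∧ v' < v) := by
  have h1 : (v : ℕ) < n := v.isLt
  have h2 : (v' : ℕ) < n := v'.isLt
  have hlt : v' < v ↔ (v' : ℕ) < (v : ℕ) := Iff.rfl
  rw [hlt]
  rcases Nat.lt_trichotomy (A v) (A v') with h | h | h
  · have := mul_step n _ _ h
    constructor
    · intro _; exact Or.inl h
    · intro _; omega
  · rw [h]; omega
  · have := mul_step n _ _ h
    constructor
    · intro hk; omega
    · intro hk; rcases hk with hk | hk <;> omega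

lemma keyFwd_lt_iff (A : Fin n → ℕ) (v v' : Fin n) :
    n * A v + (v : ℕ) < n * A v' + (v' : ℕ) ↔
      A v < A v' ∨ (A v = A v' ∧ v < v') := by
  have h1 : (v : ℕ) < n := v.isLt
  have h2 : (v' : ℕ) < n := v'.isLt
  have hlt : v < v' ↔ (v : ℕ) < (v' : ℕ) := Iff.rfl
  rw [hlt]
  rcases Nat.lt_trichotomy (A v) (A v') with h | h | h
  · have := mul_step n _ _ h
    constructor
    · intro _; exact Or.inl h
    · intro _; omega
  · rw [h]; omega
  · have := mul_step n _ _ h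
    constructor
    · intro hk; omega
    · intro hk; rcases hk with hk | hk <;> omega

lemma keyRev_inj (A : Fin n → ℕ) :
    Function.Injective (fun v : Fin n => n * A v + (n - 1 - (v : ℕ))) := by
  intro v v' h
  simp only at h
  by_contra hne
  have hne' : v ≠ v' := hne
  rcases lt_or_gt_of_ne hne' with hlt | hlt
  · rcases Nat.lt_trichotomy (A v) (A v') with h' | h' | h'
    · have := (keyRev_lt_iff A v v').mpr (Or.inl h'); omega
    · have := (keyRev_lt_iff A v' v).mpr (Or.inr ⟨h'.symm, hlt⟩); omega
    · have := (keyRev_lt_iff A v' v).mpr (Or.inl h'); omega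
  · rcases Nat.lt_trichotomy (A v) (A v') with h' | h' | h'
    · have := (keyRev_lt_iff A v v').mpr (Or.inl h'); omega
    · have := (keyRev_lt_iff A v v').mpr (Or.inr ⟨h', hlt⟩); omega
    · have := (keyRev_lt_iff A v' v).mpr (Or.inl h'); omega

/-- sorting machinery -/
lemma eq_sort_of_strictMono {f : Fin n → ℕ} {σ : Equiv.Perm (Fin n)}
    (h : StrictMono (f ∘ σ)) : σ = Tuple.sort f := by
  rw [Tuple.eq_sort_iff]
  refine ⟨h.monotone, fun i j hij hf => ?_⟩
  exact absurd hf (ne_of_lt (h hij))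

lemma sort_uniq {f : Fin n → ℕ} {σ τ : Equiv.Perm (Fin n)}
    (hσ : StrictMono (f ∘ σ)) (hτ : StrictMono (f ∘ τ)) : σ = τ := by
  rw [eq_sort_of_strictMono hσ, eq_sort_of_strictMono hτ]

lemma strictMono_comp_sort {f : Fin n → ℕ} (hf : Function.Injective f) :
    StrictMono (f ∘ Tuple.sort f) := by
  intro i j hij
  rcases (Tuple.monotone_sort f hij.le).lt_or_eq with h | h
  · exact h
  · exfalso
    exact absurd ((Tuple.sort f).injective (hf h)) (ne_of_lt hij)

/-- down-closed / up-closed interval lemmas -/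
lemma mem_iff_lt_card_of_down {D : Finset (Fin n)}
    (hD : ∀ ⦃i j : Fin n⦄, i ≤ j → j ∈ D → i ∈ D) (i : Fin n) :
    i ∈ D ↔ (i : ℕ) < D.card := by
  constructor
  · intro hi
    have hsub : Finset.Iic i ⊆ D := fun j hj => hD (Finset.mem_Iic.mp hj) hi
    have := Finset.card_le_card hsub
    rw [Fin.card_Iic] at this
    omega
  · intro hi
    by_contra hmem
    have hsub : D ⊆ Finset.Iio i := by
      intro j hj
      rw [Finset.mem_Iio]
      by_contra hji
      exact hmem (hD (not_lt.mp hji) hj)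
    have := Finset.card_le_card hsub
    rw [Fin.card_Iio] at this
    omega

lemma mem_iff_le_of_up {U : Finset (Fin n)}
    (hU : ∀ ⦃i j : Fin n⦄, i ≤ j → i ∈ U → j ∈ U) (i : Fin n) :
    i ∈ U ↔ n - U.card ≤ (i : ℕ) := by
  have hc : Uᶜ.card = n - U.card := by
    rw [Finset.card_compl, Fintype.card_fin]
  have hdown : ∀ ⦃a b : Fin n⦄, a ≤ b → b ∈ Uᶜ → a ∈ Uᶜ := by
    intro a b hab hb
    rw [Finset.mem_compl] at hb ⊢
    exact fun ha => hb (hU hab ha)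
  have := mem_iff_lt_card_of_down hdown i
  rw [Finset.mem_compl, hc] at this
  have hcard : U.card ≤ n := by
    have := Finset.card_le_univ U
    simpa using this
  constructor
  · intro hi
    by_contra h
    exact (this.mpr (by omega)) hi
  · intro hi
    by_contra hmem
    have h2 := this.mp hmem
    omega

-- STAGE3
/-- Stage 3: blockMax analysis -/
def levSet (w : Equiv.Perm (Fin n)) (l : ℕ) : Finset (Fin n) :=
  Finset.univ.filter fun v => lev w v = l

lemma mem_levSet {w : Equiv.Perm (Fin n)} {l : ℕ} {v : Fin n} :
    v ∈ levSet w l ↔ lev w v = l := by simp [levSet]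

def mx (w : Equiv.Perm (Fin n)) (l : ℕ) : ℕ := (levSet w l).sup Fin.val

lemma val_max' (s : Finset (Fin n)) (h : s.Nonempty) : (s.max' h).val = s.sup Fin.val := by
  apply le_antisymm
  · exact Finset.le_sup (Finset.max'_mem s h)
  · exact Finset.sup_le fun b hb => (Finset.le_max' s b hb : b ≤ _)

lemma blockMax_eq (w : Equiv.Perm (Fin n)) (v : Fin n) : blockMax w v = mx w (lev w v) := by
  rw [blockMax]
  refine (val_max' _ _).trans ?_
  have hset : (Finset.univ.filter fun v' : Fin n => eps w (w⁻¹ v') = eps w (w⁻¹ v))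
      = levSet w (lev w v) := by
    apply Finset.filter_congr
    intro x _
    rw [eps_eq, eps_eq]
    have b1 := one_le_lev w x
    have b2 := lev_le w x
    have b3 := one_le_lev w v
    have b4 := lev_le w v
    show _ ↔ lev w x = lev w v
    rw [lev, lev] at *
    omega
  rw [hset]
  rfl

lemma mx_step (w : Equiv.Perm (Fin n)) {l : ℕ} (h2 : 2 ≤ l) (hne : (levSet w l).Nonempty) :
    (levSet w (l - 1)).Nonempty ∧ mx w l < mx w (l - 1) := by
  obtain ⟨v, hv, hsup⟩ := Finset.exists_mem_eq_sup _ hne Fin.val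
  rw [mem_levSet] at hv
  have hlis : 2 ≤ lisFrom w (w⁻¹ v) := by rw [lev] at hv; omega
  obtain ⟨j, hij, hwj, hl⟩ := exists_next hlis
  have hmem : w j ∈ levSet w (l - 1) := by
    rw [mem_levSet, lev_apply, hl]
    rw [lev] at hv
    rw [hv]
  have h1 : (w j).val ≤ mx w (l - 1) := Finset.le_sup hmem
  have hvj : v < w j := by
    have := hwj
    rwa [Equiv.Perm.apply_inv_self] at this
  have h2' : mx w l = v.val := hsup
  exact ⟨⟨w j, hmem⟩, by rw [h2']; exact lt_of_lt_of_le hvj h1⟩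

lemma mx_desc (w : Equiv.Perm (Fin n)) : ∀ (k l : ℕ), 1 ≤ l - k → (levSet w l).Nonempty →
    (levSet w (l - k)).Nonempty ∧ (0 < k → mx w l < mx w (l - k)) := by
  intro k
  induction k with
  | zero => intro l h hne; exact ⟨by simpa using hne, by omega⟩
  | succ k ih =>
    intro l h hne
    obtain ⟨hne', hlt⟩ := ih l (by omega) hne
    obtain ⟨hne'', hlt'⟩ := mx_step w (show 2 ≤ l - k by omega) hne'
    have heq : l - (k + 1) = (l - k) - 1 := by omega
    rw [heq]
    refine ⟨hne'', fun _ => ?_⟩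
    rcases Nat.eq_zero_or_pos k with rfl | hk
    · simpa using hlt'
    · exact lt_trans (hlt hk) hlt'

lemma blockMax_lt {w : Equiv.Perm (Fin n)} {v v' : Fin n} (h : lev w v' < lev w v) :
    blockMax w v < blockMax w v' := by
  have hne : (levSet w (lev w v)).Nonempty := ⟨v, mem_levSet.mpr rfl⟩
  have h1 := one_le_lev w v'
  obtain ⟨_, hlt⟩ := mx_desc w (lev w v - lev w v') (lev w v) (by omega) hne
  rw [blockMax_eq, blockMax_eq]
  have heq : lev w v - (lev w v - lev w v') = lev w v' := by omega
  rw [heq] at hlt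
  exact hlt (by omega)

lemma blockMax_congr {w : Equiv.Perm (Fin n)} {v v' : Fin n} (h : lev w v = lev w v') :
    blockMax w v = blockMax w v' := by rw [blockMax_eq, blockMax_eq, h]

lemma phi_strict (w : Equiv.Perm (Fin n)) :
    StrictMono (fun i => n * (n - lev w (Phi w i)) + (n - 1 - (Phi w i : ℕ))) := by
  have hkey : StrictMono ((fun v : Fin n => n * blockMax w v + (n - 1 - (v : ℕ))) ∘ (Phi w)) := by
    rw [Phi]
    exact strictMono_comp_sort (keyRev_inj (blockMax w))
  intro i j hij
  have h := hkey hij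
  simp only [Function.comp_apply] at h
  rw [keyRev_lt_iff] at h
  have goal := keyRev_lt_iff (fun v => n - lev w v) (Phi w i) (Phi w j)
  rw [goal]
  have bi := lev_le w (Phi w i)
  have bj := lev_le w (Phi w j)
  rcases h with h | ⟨h, h2⟩
  · left
    rcases Nat.lt_trichotomy (lev w (Phi w i)) (lev w (Phi w j)) with h' | h' | h'
    · exact absurd (blockMax_lt h') (by omega)
    · exact absurd (blockMax_congr h') (by omega)
    · omega
  · right
    refine ⟨?_, h2⟩
    rcases Nat.lt_trichotomy (lev w (Phi w i)) (lev w (Phi w j)) with h' | h' | h'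
    · exact absurd (blockMax_lt h') (by omega)
    · omega
    · exact absurd (blockMax_lt h') (by omega)

-- STAGE4
/-- Stage 4: run structure and the layered permutation -/
lemma antitone_run {x : Equiv.Perm (Fin n)} {h : Fin n → ℕ}
    (hx : Antitone fun i => h (x i)) (t : ℕ) (i : Fin n) :
    t ≤ h (x i) ↔ (i : ℕ) < (Finset.univ.filter fun v => t ≤ h v).card := by
  have hcard : (Finset.univ.filter fun j : Fin n => t ≤ h (x j)).card
      = (Finset.univ.filter fun v : Fin n => t ≤ h v).card :=
      card_filter_perm x (fun v => t ≤ h v)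
  rw [← hcard]
  have hdown : ∀ ⦃a b : Fin n⦄, a ≤ b →
      b ∈ (Finset.univ.filter fun j : Fin n => t ≤ h (x j)) →
      a ∈ (Finset.univ.filter fun j : Fin n => t ≤ h (x j)) := by
    intro a b hab hb
    simp only [Finset.mem_filter, Finset.mem_univ, true_and] at hb ⊢
    exact le_trans hb (hx hab)
  have := mem_iff_lt_card_of_down hdown i
  simpa using this

lemma monotone_run {x : Equiv.Perm (Fin n)} {h : Fin n → ℕ}
    (hx : Monotone fun i => h (x i)) (t : ℕ) (i : Fin n) :
    t ≤ h (x i) ↔ n - (Finset.univ.filter fun v => t ≤ h v).card ≤ (i : ℕ) := by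
  have hcard : (Finset.univ.filter fun j : Fin n => t ≤ h (x j)).card
      = (Finset.univ.filter fun v : Fin n => t ≤ h v).card :=
      card_filter_perm x (fun v => t ≤ h v)
  rw [← hcard]
  have hup : ∀ ⦃a b : Fin n⦄, a ≤ b →
      a ∈ (Finset.univ.filter fun j : Fin n => t ≤ h (x j)) →
      b ∈ (Finset.univ.filter fun j : Fin n => t ≤ h (x j)) := by
    intro a b hab ha
    simp only [Finset.mem_filter, Finset.mem_univ, true_and] at ha ⊢
    exact le_trans ha (hx hab)
  have := mem_iff_le_of_up hup i
  simpa using this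

def aOf (w : Equiv.Perm (Fin n)) : ℕ → ℕ := fun m => if h : m < n then shape w ⟨m, h⟩ else 0

def mu (w : Equiv.Perm (Fin n)) (v : Fin n) : ℕ := blockIdx n (aOf w) v

lemma eOf_shape_eq (w : Equiv.Perm (Fin n)) : eOf (shape w) = layered n (aOf w) := rfl

lemma aOf_eq (w : Equiv.Perm (Fin n)) {t : ℕ} (ht : t < n) :
    aOf w t = (Finset.univ.filter fun i : Fin n => lisFrom w i = n - t).card := by
  rw [aOf]
  rw [dif_pos ht]
  exact shape_eq w ⟨t, ht⟩

lemma cpos_gt (w : Equiv.Perm (Fin n)) {t : ℕ} (ht : n < t) : cpos w t = 0 := by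
  rw [cpos, Finset.card_eq_zero, Finset.filter_eq_empty_iff]
  intro i _
  have := lisFrom_le_n w i
  omega

lemma psum_aOf (w : Equiv.Perm (Fin n)) : ∀ t, t ≤ n → psum (aOf w) t = cpos w (n - t + 1) := by
  intro t
  induction t with
  | zero =>
    intro _
    have h0 : psum (aOf w) 0 = 0 := by simp [psum]
    rw [h0, Nat.sub_zero, cpos_gt w (by omega)]
  | succ t ih =>
    intro ht
    have h0 : psum (aOf w) (t + 1) = psum (aOf w) t + aOf w t := by
      rw [psum, psum, Finset.sum_range_succ]
    rw [h0, ih (by omega), aOf_eq w (show t < n by omega)]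
    have key := cpos_succ w (n - t)
    have h1 : n - (t + 1) + 1 = n - t := by omega
    have h2 : n - t + 1 = (n - t) + 1 := rfl
    rw [h1, key]

lemma psum_aOf_n (w : Equiv.Perm (Fin n)) : psum (aOf w) n = n := by
  rw [psum_aOf w n le_rfl]
  have h : n - n + 1 = 1 := by omega
  rw [h, cpos_one]

lemma psum_mono (a : ℕ → ℕ) : Monotone (psum a) := fun s t hst =>
  Finset.sum_le_sum_of_subset (Finset.range_subset_range.mpr hst)

lemma blockIdx_ge_iff (a : ℕ → ℕ) {t : ℕ} (ht : t < n) (v : Fin n) :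
    t + 1 ≤ blockIdx n a v ↔ psum a (t + 1) ≤ (v : ℕ) := by
  constructor
  · intro h
    by_contra hp
    push_neg at hp
    have hsub : ((Finset.range n).filter fun m => psum a (m + 1) ≤ (v : ℕ)) ⊆
        Finset.range t := by
      intro m hm
      simp only [Finset.mem_filter, Finset.mem_range] at hm ⊢
      by_contra hmt
      push_neg at hmt
      have := psum_mono a (show t + 1 ≤ m + 1 by omega)
      omega
    have := Finset.card_le_card hsub
    rw [Finset.card_range] at this
    rw [blockIdx] at h
    omega
  · intro h
    have hsub : Finset.range (t + 1) ⊆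
        (Finset.range n).filter fun m => psum a (m + 1) ≤ (v : ℕ) := by
      intro m hm
      rw [Finset.mem_range] at hm
      simp only [Finset.mem_filter, Finset.mem_range]
      exact ⟨by omega, le_trans (psum_mono a (show m + 1 ≤ t + 1 by omega)) h⟩
    have := Finset.card_le_card hsub
    rw [Finset.card_range] at this
    rw [blockIdx]
    omega

lemma blockIdx_lt (a : ℕ → ℕ) (hn : psum a n = n) (v : Fin n) : blockIdx n a v < n := by
  have hv : (v : ℕ) < n := v.isLt
  rw [blockIdx]
  have hsub : ((Finset.range n).filter fun m => psum a (m + 1) ≤ (v : ℕ)) ⊆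
      Finset.range (n - 1) := by
    intro m hm
    simp only [Finset.mem_filter, Finset.mem_range] at hm ⊢
    by_contra hmt
    push_neg at hmt
    have := psum_mono a (show n ≤ m + 1 by omega)
    omega
  have := Finset.card_le_card hsub
  rw [Finset.card_range] at this
  omega

lemma blockIdx_mono (a : ℕ → ℕ) : Monotone fun v : Fin n => blockIdx n a v := by
  intro v v' hvv
  apply Finset.card_le_card
  intro m hm
  simp only [Finset.mem_filter] at hm ⊢
  exact ⟨hm.1, le_trans hm.2 (Fin.le_def.mp hvv)⟩

lemma mu_lt (w : Equiv.Perm (Fin n)) (v : Fin n) : mu w v < n :=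
  blockIdx_lt (aOf w) (psum_aOf_n w) v

lemma mu_mono (w : Equiv.Perm (Fin n)) : Monotone (mu w) := blockIdx_mono (aOf w)

lemma mu_ge_iff (w : Equiv.Perm (Fin n)) {t : ℕ} (ht : t < n) (v : Fin n) :
    t + 1 ≤ mu w v ↔ cpos w (n - t) ≤ (v : ℕ) := by
  rw [mu, blockIdx_ge_iff (aOf w) ht v, psum_aOf w (t + 1) (by omega)]
  have h1 : n - (t + 1) + 1 = n - t := by omega
  rw [h1]

lemma card_val_ge {c : ℕ} (hc : c ≤ n) :
    (Finset.univ.filter fun v : Fin n => c ≤ (v : ℕ)).card = n - c := by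
  rcases eq_or_lt_of_le hc with rfl | h
  · rw [Nat.sub_self, Finset.card_eq_zero, Finset.filter_eq_empty_iff]
    intro v _
    have := v.isLt
    omega
  · have hset : (Finset.univ.filter fun v : Fin n => c ≤ (v : ℕ)) = Finset.Ici (⟨c, h⟩ : Fin n) := by
      ext v
      simp [Finset.mem_Ici, Fin.le_def]
    rw [hset, Fin.card_Ici]

lemma card_mu_ge (w : Equiv.Perm (Fin n)) {t : ℕ} (ht : t < n) :
    (Finset.univ.filter fun v : Fin n => t + 1 ≤ mu w v).card = n - psum (aOf w) (t + 1) := by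
  have hps : psum (aOf w) (t + 1) ≤ n := by
    have := psum_mono (aOf w) (show t + 1 ≤ n by omega)
    rw [psum_aOf_n w] at this
    exact this
  have h1 : (Finset.univ.filter fun v : Fin n => t + 1 ≤ mu w v).card
      = (Finset.univ.filter fun v : Fin n => psum (aOf w) (t + 1) ≤ (v : ℕ)).card :=
    card_filter_ext fun v => by rw [mu]; exact blockIdx_ge_iff (aOf w) ht v
  rw [h1]
  exact card_val_ge hps

lemma eOf_strict (w : Equiv.Perm (Fin n)) :
    StrictMono ((fun v : Fin n => n * mu w v + (n - 1 - (v : ℕ))) ∘ (eOf (shape w))) := by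
  rw [eOf_shape_eq, layered]
  exact strictMono_comp_sort (keyRev_inj (mu w))

lemma mu_eOf_mono (w : Equiv.Perm (Fin n)) :
    Monotone fun i => mu w (eOf (shape w) i) := by
  intro i j hij
  rcases eq_or_lt_of_le hij with rfl | h
  · exact le_rfl
  · have := eOf_strict w h
    simp only [Function.comp_apply] at this
    rw [keyRev_lt_iff] at this
    rcases this with h' | ⟨h', _⟩
    · exact h'.le
    · exact h'.le

lemma mu_eOf (w : Equiv.Perm (Fin n)) (i : Fin n) : mu w (eOf (shape w) i) = mu w i := by
  have key : ∀ t : ℕ, t < n → (t + 1 ≤ mu w (eOf (shape w) i) ↔ t + 1 ≤ mu w i) := by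
    intro t ht
    have hps : psum (aOf w) (t + 1) ≤ n := by
      have := psum_mono (aOf w) (show t + 1 ≤ n by omega)
      rw [psum_aOf_n w] at this
      exact this
    rw [monotone_run (mu_eOf_mono w) (t + 1) i, card_mu_ge w ht,
      mu, blockIdx_ge_iff (aOf w) ht i]
    omega
  apply le_antisymm
  · by_contra hc
    push_neg at hc
    have h2 := (key (mu w i) (mu_lt w i)).mp (by omega)
    omega
  · by_contra hc
    push_neg at hc
    have h2 := (key (mu w (eOf (shape w) i)) (mu_lt w _)).mpr (by omega)
    omega

lemma eOf_rev (w : Equiv.Perm (Fin n)) {i j : Fin n} (hij : i < j) (hmu : mu w i = mu w j) :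
    eOf (shape w) j < eOf (shape w) i := by
  have := eOf_strict w hij
  simp only [Function.comp_apply] at this
  rw [keyRev_lt_iff] at this
  rcases this with h | ⟨_, h⟩
  · rw [mu_eOf, mu_eOf, hmu] at h
    omega
  · exact h

lemma eOf_sq (w : Equiv.Perm (Fin n)) : eOf (shape w) * eOf (shape w) = 1 := by
  set e := eOf (shape w) with he
  have h1 : StrictMono ((fun v : Fin n => n * mu w v + (v : ℕ)) ∘ ⇑(e * e)) := by
    intro i j hij
    simp only [Function.comp_apply, Equiv.Perm.coe_mul]
    rw [keyFwd_lt_iff]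
    rcases eq_or_lt_of_le (mu_mono w hij.le) with hmu | hmu
    · right
      have h2 : e j < e i := eOf_rev w hij hmu
      have h3 : mu w (e j) = mu w (e i) := by rw [mu_eOf, mu_eOf, hmu]
      have h4 : e (e i) < e (e j) := eOf_rev w h2 h3
      rw [mu_eOf, mu_eOf, mu_eOf, mu_eOf]
      exact ⟨hmu, h4⟩
    · left
      rw [mu_eOf, mu_eOf, mu_eOf, mu_eOf]
      exact hmu
  have h2 : StrictMono ((fun v : Fin n => n * mu w v + (v : ℕ)) ∘ ⇑(1 : Equiv.Perm (Fin n))) := by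
    intro i j hij
    simp only [Function.comp_apply, Equiv.Perm.coe_one, id]
    rw [keyFwd_lt_iff]
    rcases eq_or_lt_of_le (mu_mono w hij.le) with hmu | hmu
    · exact Or.inr ⟨hmu, hij⟩
    · exact Or.inl hmu
  exact sort_uniq h1 h2

-- STAGE5
/-- Stage 5: run identities and the main identity -/
lemma phi_lev_antitone (w : Equiv.Perm (Fin n)) : Antitone fun i => lev w (Phi w i) := by
  intro i j hij
  show lev w (Phi w j) ≤ lev w (Phi w i)
  rcases eq_or_lt_of_le hij with rfl | h
  · exact le_rfl
  · have hs := phi_strict w h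
    have hk := (keyRev_lt_iff (fun v => n - lev w v) (Phi w i) (Phi w j)).mp hs
    have b1 := lev_le w (Phi w i)
    have b2 := lev_le w (Phi w j)
    rcases hk with h' | ⟨h', _⟩
    · have h'' : n - lev w (Phi w i) < n - lev w (Phi w j) := h'
      omega
    · have h'' : n - lev w (Phi w i) = n - lev w (Phi w j) := h'
      omega

lemma phi_run (w : Equiv.Perm (Fin n)) (t : ℕ) (i : Fin n) :
    t ≤ lev w (Phi w i) ↔ (i : ℕ) < cpos w t := by
  rw [← card_lev_filter w t]
  exact antitone_run (phi_lev_antitone w) t i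

lemma phi_desc (w : Equiv.Perm (Fin n)) {i j : Fin n} (hij : i < j)
    (hlev : lev w (Phi w i) = lev w (Phi w j)) : Phi w j < Phi w i := by
  have hs := phi_strict w hij
  have := (keyRev_lt_iff (fun v => n - lev w v) (Phi w i) (Phi w j)).mp hs
  rcases this with h' | ⟨_, h'⟩
  · have h'' : n - lev w (Phi w i) < n - lev w (Phi w j) := h'
    omega
  · exact h'

lemma lev_phi_eq (w : Equiv.Perm (Fin n)) (i : Fin n) : lev w (Phi w i) = n - mu w i := by
  set l := lev w (Phi w i) with hl
  have b1 : 1 ≤ l := one_le_lev w _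
  have b2 : l ≤ n := lev_le w _
  have hmulo : mu w i ≤ n - l := by
    by_contra hc
    push_neg at hc
    have ht : n - l < n := by omega
    have := (mu_ge_iff w ht i).mp (by omega)
    have heq : n - (n - l) = l := by omega
    rw [heq] at this
    have h2 := (phi_run w l i).mp le_rfl
    omega
  have hmuhi : n - l ≤ mu w i := by
    rcases eq_or_lt_of_le b2 with heq | hln
    · omega
    · have h2 : ¬ ((i : ℕ) < cpos w (l + 1)) := by
        intro hc
        have := (phi_run w (l + 1) i).mpr hc
        omega
      push_neg at h2
      have ht : n - l - 1 < n := by omega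
      have heq : n - (n - l - 1) = l + 1 := by omega
      have := (mu_ge_iff w ht i).mpr (by rw [heq]; exact h2)
      omega
  omega

lemma lev_inv (w : Equiv.Perm (Fin n)) (p : Fin n) : lev w⁻¹ p = lisFrom w p := by
  rw [lev]
  have h1 : (w⁻¹)⁻¹ = w := inv_inv w
  rw [h1]
  exact lisFrom_inv w p

lemma cpos_inv (w : Equiv.Perm (Fin n)) (t : ℕ) : cpos w⁻¹ t = cpos w t := by
  rw [← card_lev_filter w⁻¹ t]
  rw [card_filter_ext fun v => by rw [lev_inv]]
  rfl

lemma shape_inv (w : Equiv.Perm (Fin n)) : shape w⁻¹ = shape w := by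
  funext k
  rw [shape_eq, shape_eq]
  have h1 := cpos_succ w⁻¹ (n - (k : ℕ))
  have h2 := cpos_succ w (n - (k : ℕ))
  have h3 := cpos_inv w (n - (k : ℕ))
  have h4 := cpos_inv w (n - (k : ℕ) + 1)
  have e1 : (Finset.univ.filter fun i : Fin n => lisFrom w⁻¹ i = n - (k : ℕ)).card
      = cpos w⁻¹ (n - (k : ℕ)) - cpos w⁻¹ (n - (k : ℕ) + 1) := by omega
  have e2 : (Finset.univ.filter fun i : Fin n => lisFrom w i = n - (k : ℕ)).card
      = cpos w (n - (k : ℕ)) - cpos w (n - (k : ℕ) + 1) := by omega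
  omega

lemma mu_inv (w : Equiv.Perm (Fin n)) : mu w⁻¹ = mu w := by
  have ha : aOf w⁻¹ = aOf w := by
    funext m
    rw [aOf, aOf, shape_inv]
  funext v
  rw [mu, mu, ha]

lemma lisFrom_y (w : Equiv.Perm (Fin n)) (i : Fin n) :
    lisFrom w (Phi w⁻¹ i) = n - mu w i := by
  have h := lev_phi_eq w⁻¹ i
  rw [lev_inv, mu_inv] at h
  exact h

lemma main_identity (w : Equiv.Perm (Fin n)) :
    w * Phi w⁻¹ = Phi w * eOf (shape w) := by
  apply sort_uniq (f := fun v : Fin n => n * (n - lev w v) + (v : ℕ))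
  · intro i j hij
    simp only [Function.comp_apply, Equiv.Perm.coe_mul]
    refine (keyFwd_lt_iff (fun v => n - lev w v) _ _).mpr ?_
    have li : lev w (w (Phi w⁻¹ i)) = n - mu w i := by
      rw [lev_apply, lisFrom_y]
    have lj : lev w (w (Phi w⁻¹ j)) = n - mu w j := by
      rw [lev_apply, lisFrom_y]
    have bi : mu w i < n := mu_lt w i
    have bj : mu w j < n := mu_lt w j
    rcases eq_or_lt_of_le (mu_mono w hij.le) with hmu | hmu
    · refine Or.inr ⟨show n - lev w (w (Phi w⁻¹ i)) = n - lev w (w (Phi w⁻¹ j)) by omega, ?_⟩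
      have hlev : lev w⁻¹ (Phi w⁻¹ i) = lev w⁻¹ (Phi w⁻¹ j) := by
        rw [lev_inv, lev_inv, lisFrom_y, lisFrom_y, hmu]
      have hyy : Phi w⁻¹ j < Phi w⁻¹ i := phi_desc w⁻¹ hij hlev
      have hls : lisFrom w (Phi w⁻¹ j) = lisFrom w (Phi w⁻¹ i) := by
        rw [lisFrom_y, lisFrom_y, hmu]
      exact same_level_lt hyy hls
    · exact Or.inl (show n - lev w (w (Phi w⁻¹ i)) < n - lev w (w (Phi w⁻¹ j)) by omega)
  · intro i j hij
    simp only [Function.comp_apply, Equiv.Perm.coe_mul]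
    refine (keyFwd_lt_iff (fun v => n - lev w v) _ _).mpr ?_
    have li : lev w (Phi w (eOf (shape w) i)) = n - mu w i := by
      rw [lev_phi_eq, mu_eOf]
    have lj : lev w (Phi w (eOf (shape w) j)) = n - mu w j := by
      rw [lev_phi_eq, mu_eOf]
    have bi : mu w i < n := mu_lt w i
    have bj : mu w j < n := mu_lt w j
    rcases eq_or_lt_of_le (mu_mono w hij.le) with hmu | hmu
    · refine Or.inr ⟨show n - lev w (Phi w (eOf (shape w) i))
          = n - lev w (Phi w (eOf (shape w) j)) by omega, ?_⟩
      have hee : eOf (shape w) j < eOf (shape w) i := eOf_rev w hij hmu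
      have hlev : lev w (Phi w (eOf (shape w) j)) = lev w (Phi w (eOf (shape w) i)) := by
        rw [li, lj, hmu]
      exact phi_desc w hee hlev
    · exact Or.inl (show n - lev w (Phi w (eOf (shape w) i))
        < n - lev w (Phi w (eOf (shape w) j)) by omega)

-- STAGE6
/-- Stage 6: inversion number machinery -/
def pairsLT : Finset (Fin n × Fin n) := Finset.univ.filter fun p => p.1 < p.2

def sortPair (τ : Equiv.Perm (Fin n)) (p : Fin n × Fin n) : Fin n × Fin n :=
  if τ p.1 < τ p.2 then (τ p.1, τ p.2) else (τ p.2, τ p.1)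

def badPairs (σ τ : Equiv.Perm (Fin n)) : Finset (Fin n × Fin n) :=
  pairsLT.filter fun p => τ p.2 < τ p.1 ∧ σ (τ p.1) < σ (τ p.2)

lemma card_filter_ext' {β : Type*} {s : Finset β} {p q : β → Prop}
    [DecidablePred p] [DecidablePred q] (h : ∀ x ∈ s, p x ↔ q x) :
    (s.filter p).card = (s.filter q).card := by
  congr 1
  exact Finset.filter_congr h

lemma invNum_eq (σ : Equiv.Perm (Fin n)) :
    invNum σ = (pairsLT.filter fun p => σ p.2 < σ p.1).card := by
  rw [invNum]
  congr 1
  apply Finset.ext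
  intro p
  simp only [pairsLT, Finset.mem_filter, Finset.mem_univ, true_and]

lemma mem_pairsLT {p : Fin n × Fin n} : p ∈ pairsLT ↔ p.1 < p.2 := by
  simp [pairsLT]

lemma sortPair_mem (τ : Equiv.Perm (Fin n)) {p : Fin n × Fin n} (hp : p.1 < p.2) :
    (sortPair τ p).1 < (sortPair τ p).2 := by
  rw [sortPair]
  split_ifs with h
  · exact h
  · rcases lt_or_ge (τ p.2) (τ p.1) with h' | h'
    · exact h'
    · exfalso
      rcases eq_or_lt_of_le h' with h'' | h''
      · exact absurd (τ.injective h'') (ne_of_lt hp)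
      · exact h h''

lemma sortPair_inv (τ : Equiv.Perm (Fin n)) {p : Fin n × Fin n} (hp : p.1 < p.2) :
    sortPair τ⁻¹ (sortPair τ p) = p := by
  rcases lt_or_ge (τ p.1) (τ p.2) with h | h
  · have h1 : sortPair τ p = (τ p.1, τ p.2) := by rw [sortPair, if_pos h]
    rw [h1, sortPair]
    simp [hp]
  · have h1 : sortPair τ p = (τ p.2, τ p.1) := by rw [sortPair, if_neg (not_lt.mpr h)]
    rw [h1, sortPair]
    simp [not_lt.mpr hp.le]

lemma invNum_sortPair (σ τ : Equiv.Perm (Fin n)) :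
    invNum σ = (pairsLT.filter fun p =>
      σ ((sortPair τ p).2) < σ ((sortPair τ p).1)).card := by
  rw [invNum_eq]
  apply Finset.card_nbij' (sortPair τ⁻¹) (sortPair τ)
  · intro q hq
    rw [Finset.mem_coe, Finset.mem_filter] at hq ⊢
    obtain ⟨hq1, hq2⟩ := hq
    rw [mem_pairsLT] at hq1
    have hmem : (sortPair τ⁻¹ q).1 < (sortPair τ⁻¹ q).2 := sortPair_mem τ⁻¹ hq1
    have hback : sortPair τ (sortPair τ⁻¹ q) = q := by
      have := sortPair_inv τ⁻¹ (p := q) hq1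
      rwa [inv_inv] at this
    refine ⟨mem_pairsLT.mpr hmem, ?_⟩
    rw [hback]
    exact hq2
  · intro p hp
    rw [Finset.mem_coe, Finset.mem_filter] at hp ⊢
    obtain ⟨hp1, hp2⟩ := hp
    rw [mem_pairsLT] at hp1
    exact ⟨mem_pairsLT.mpr (sortPair_mem τ hp1), hp2⟩
  · intro q hq
    rw [Finset.mem_coe, Finset.mem_filter, mem_pairsLT] at hq
    have := sortPair_inv τ⁻¹ (p := q) hq.1
    rwa [inv_inv] at this
  · intro p hp
    rw [Finset.mem_coe, Finset.mem_filter, mem_pairsLT] at hp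
    exact sortPair_inv τ hp.1

lemma invNum_master (σ τ : Equiv.Perm (Fin n)) :
    invNum σ + invNum τ = invNum (σ * τ) + 2 * (badPairs σ τ).card := by
  classical
  set S : Finset (Fin n × Fin n) := pairsLT with hS
  set f1 : Fin n × Fin n → Prop := fun p => σ (τ p.2) < σ (τ p.1) with hf1
  set f2 : Fin n × Fin n → Prop := fun p => τ p.2 < τ p.1 with hf2
  set f3 : Fin n × Fin n → Prop := fun p =>
    σ ((sortPair τ p).2) < σ ((sortPair τ p).1) with hf3
  have hxor : ∀ p ∈ S, f1 p ↔ ((¬ f2 p ∧ f3 p) ∨ (f2 p ∧ ¬ f3 p)) := by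
    intro p hp
    rw [hS, mem_pairsLT] at hp
    have hne : τ p.1 ≠ τ p.2 := fun h => absurd (τ.injective h) (ne_of_lt hp)
    have hne2 : σ (τ p.1) ≠ σ (τ p.2) := fun h => hne (σ.injective h)
    rw [hf1, hf2, hf3]
    simp only
    rw [sortPair]
    rcases lt_or_ge (τ p.1) (τ p.2) with h | h
    · rw [if_pos h]
      simp only
      constructor
      · intro h1
        exact Or.inl ⟨not_lt.mpr h.le, h1⟩
      · intro h1
        rcases h1 with ⟨_, h1⟩ | ⟨h1, _⟩
        · exact h1
        · exact absurd h (not_lt.mpr h1.le)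
    · have h' : τ p.2 < τ p.1 := lt_of_le_of_ne h (Ne.symm hne)
      rw [if_neg (not_lt.mpr h)]
      simp only
      constructor
      · intro h1
        exact Or.inr ⟨h', not_lt.mpr h1.le⟩
      · intro h1
        rcases h1 with ⟨h1, _⟩ | ⟨_, h1⟩
        · exact absurd h' h1
        · rcases lt_or_ge (σ (τ p.2)) (σ (τ p.1)) with h2 | h2
          · exact h2
          · exact absurd (lt_of_le_of_ne h2 hne2) h1
  have hA : invNum τ = (S.filter f2).card := invNum_eq τ
  have hB : invNum (σ * τ) = (S.filter f1).card := by
    rw [invNum_eq]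
    apply card_filter_ext'
    intro p _
    simp only [Equiv.Perm.mul_apply, hf1]
  have hC : invNum σ = (S.filter f3).card := invNum_sortPair σ τ
  have hbad : (badPairs σ τ).card = (S.filter fun p => f2 p ∧ f3 p).card := by
    rw [badPairs]
    apply card_filter_ext'
    intro p hp
    rw [mem_pairsLT] at hp
    rw [hf2, hf3]
    simp only
    constructor
    · intro ⟨h1, h2⟩
      refine ⟨h1, ?_⟩
      rw [sortPair, if_neg (not_lt.mpr h1.le)]
      exact h2
    · intro ⟨h1, h2⟩
      refine ⟨h1, ?_⟩
      rwa [sortPair, if_neg (not_lt.mpr h1.le)] at h2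
  have hsplit2 : (S.filter f2).card
      = (S.filter fun p => f2 p ∧ f3 p).card + (S.filter fun p => f2 p ∧ ¬ f3 p).card := by
    rw [← Finset.card_filter_add_card_filter_not (s := S.filter f2) f3]
    rw [Finset.filter_filter, Finset.filter_filter]
  have hsplit3 : (S.filter f3).card
      = (S.filter fun p => f2 p ∧ f3 p).card + (S.filter fun p => ¬ f2 p ∧ f3 p).card := by
    rw [← Finset.card_filter_add_card_filter_not (s := S.filter f3) f2]
    rw [Finset.filter_filter, Finset.filter_filter]
    congr 1
    · exact card_filter_ext' fun p _ => and_comm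
    · exact card_filter_ext' fun p _ => and_comm
  have hsplit1 : (S.filter f1).card
      = (S.filter fun p => ¬ f2 p ∧ f3 p).card + (S.filter fun p => f2 p ∧ ¬ f3 p).card := by
    have hunion : S.filter f1
        = (S.filter fun p => ¬ f2 p ∧ f3 p) ∪ (S.filter fun p => f2 p ∧ ¬ f3 p) := by
      apply Finset.ext
      intro p
      simp only [Finset.mem_union, Finset.mem_filter]
      constructor
      · intro ⟨hp, h1⟩
        rcases (hxor p hp).mp h1 with h | h
        · exact Or.inl ⟨hp, h⟩
        · exact Or.inr ⟨hp, h⟩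
      · intro h
        rcases h with ⟨hp, h⟩ | ⟨hp, h⟩
        · exact ⟨hp, (hxor p hp).mpr (Or.inl h)⟩
        · exact ⟨hp, (hxor p hp).mpr (Or.inr h)⟩
    rw [hunion, Finset.card_union_of_disjoint]
    rw [Finset.disjoint_filter]
    intro p _ h1 h2
    exact h1.1 h2.1
  omega

lemma invNum_add_iff (σ τ : Equiv.Perm (Fin n)) :
    invNum (σ * τ) = invNum σ + invNum τ ↔
      ∀ i j : Fin n, i < j → τ j < τ i → σ (τ j) < σ (τ i) := by
  have hm := invNum_master σ τ
  constructor
  · intro heq i j hij hτ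
    have hzero : (badPairs σ τ).card = 0 := by omega
    rw [Finset.card_eq_zero, badPairs, Finset.filter_eq_empty_iff] at hzero
    have h3 := hzero (mem_pairsLT.mpr (show ((i, j) : Fin n × Fin n).1 < (i, j).2 from hij))
    rcases lt_or_ge (σ (τ j)) (σ (τ i)) with h | h
    · exact h
    · exfalso
      apply h3
      refine ⟨hτ, lt_of_le_of_ne h ?_⟩
      intro heq2
      exact absurd (τ.injective (σ.injective heq2)) (ne_of_lt hij)
  · intro hcond
    have hzero : (badPairs σ τ).card = 0 := by
      rw [Finset.card_eq_zero, badPairs, Finset.filter_eq_empty_iff]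
      intro p hp
      rw [mem_pairsLT] at hp
      intro ⟨h1, h2⟩
      exact absurd (hcond p.1 p.2 hp h1) (not_lt.mpr h2.le)
    omega

-- STAGE7
/-- Stage 7: existence and uniqueness -/
lemma eOf_apply_apply (w : Equiv.Perm (Fin n)) (k : Fin n) :
    eOf (shape w) (eOf (shape w) k) = k := by
  have h := eOf_sq w
  have h2 : (eOf (shape w) * eOf (shape w)) k = (1 : Equiv.Perm (Fin n)) k := by rw [h]
  simpa using h2

lemma e_inversion_block (w : Equiv.Perm (Fin n)) {i j : Fin n} (hij : i < j)
    (he : eOf (shape w) j < eOf (shape w) i) : mu w i = mu w j := by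
  rcases eq_or_lt_of_le (mu_mono w hij.le) with h | h
  · exact h
  · exfalso
    have h1 : mu w (eOf (shape w) j) ≤ mu w (eOf (shape w) i) := mu_mono w he.le
    rw [mu_eOf, mu_eOf] at h1
    omega

lemma phi_same_block_desc (w : Equiv.Perm (Fin n)) {i j : Fin n} (hij : i < j)
    (h : mu w i = mu w j) : Phi w j < Phi w i :=
  phi_desc w hij (by rw [lev_phi_eq, lev_phi_eq, h])

lemma mu_y_inv (w : Equiv.Perm (Fin n)) (p : Fin n) :
    mu w ((Phi w⁻¹)⁻¹ p) = n - lisFrom w p := by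
  have h := lisFrom_y w ((Phi w⁻¹)⁻¹ p)
  rw [Equiv.Perm.apply_inv_self] at h
  have h1 := mu_lt w ((Phi w⁻¹)⁻¹ p)
  have h2 := one_le_lisFrom w p
  have h3 := lisFrom_le_n w p
  omega

lemma u_additive (w : Equiv.Perm (Fin n)) :
    invNum ((Phi w * eOf (shape w)) * eOf (shape w))
      = invNum (Phi w * eOf (shape w)) + invNum (eOf (shape w)) := by
  apply (invNum_add_iff _ _).mpr
  intro i j hij he
  have hmu : mu w i = mu w j := e_inversion_block w hij he
  have h1 : (Phi w * eOf (shape w)) (eOf (shape w) j) = Phi w j := by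
    rw [Equiv.Perm.mul_apply, eOf_apply_apply]
  have h2 : (Phi w * eOf (shape w)) (eOf (shape w) i) = Phi w i := by
    rw [Equiv.Perm.mul_apply, eOf_apply_apply]
  rw [h1, h2]
  exact phi_same_block_desc w hij hmu

lemma phi_mul_ev (w : Equiv.Perm (Fin n)) :
    Phi w * (eOf (shape w) * (Phi w⁻¹)⁻¹) = w := by
  have hid := main_identity w
  calc Phi w * (eOf (shape w) * (Phi w⁻¹)⁻¹)
      = (Phi w * eOf (shape w)) * (Phi w⁻¹)⁻¹ := by rw [mul_assoc]
    _ = (w * Phi w⁻¹) * (Phi w⁻¹)⁻¹ := by rw [hid]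
    _ = w := by rw [mul_assoc, mul_inv_cancel, mul_one]

lemma v_additive (w : Equiv.Perm (Fin n)) :
    invNum (Phi w * (eOf (shape w) * (Phi w⁻¹)⁻¹))
      = invNum (Phi w) + invNum (eOf (shape w) * (Phi w⁻¹)⁻¹) := by
  apply (invNum_add_iff _ _).mpr
  intro i j hij hv
  have hmv : ∀ p : Fin n, mu w ((eOf (shape w) * (Phi w⁻¹)⁻¹) p) = n - lisFrom w p := by
    intro p
    rw [Equiv.Perm.mul_apply, mu_eOf, mu_y_inv]
  have hmu : mu w ((eOf (shape w) * (Phi w⁻¹)⁻¹) j)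
      ≤ mu w ((eOf (shape w) * (Phi w⁻¹)⁻¹) i) := mu_mono w hv.le
  rw [hmv i, hmv j] at hmu
  have b1 := one_le_lisFrom w i
  have b2 := lisFrom_le_n w i
  have b3 := one_le_lisFrom w j
  have b4 := lisFrom_le_n w j
  have hwij : w j < w i := by
    rcases lt_trichotomy (w i) (w j) with h | h | h
    · have := lisFrom_succ_le hij h
      omega
    · exact absurd (w.injective h) (ne_of_lt hij)
    · exact h
  have hx : ∀ p : Fin n, Phi w ((eOf (shape w) * (Phi w⁻¹)⁻¹) p) = w p := by
    intro p
    have := phi_mul_ev w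
    calc Phi w ((eOf (shape w) * (Phi w⁻¹)⁻¹) p)
        = (Phi w * (eOf (shape w) * (Phi w⁻¹)⁻¹)) p := rfl
      _ = w p := by rw [this]
  rw [hx i, hx j]
  exact hwij

lemma factor_unique (w : Equiv.Perm (Fin n)) {u' v' : Equiv.Perm (Fin n)}
    (h1 : w = u' * eOf (shape w) * v')
    (h2 : invNum w = invNum u' + invNum (eOf (shape w)) + invNum v') :
    u' * eOf (shape w) = Phi w := by
  set e := eOf (shape w) with hedef
  set x' := u' * e with hx'def
  have hw : x' * v' = w := h1.symm
  have master1 : invNum u' + invNum e = invNum x' + 2 * (badPairs u' e).card :=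
    invNum_master u' e
  have master2 := invNum_master x' v'
  have hwinv : invNum (x' * v') = invNum w := by rw [hw]
  have hadd1 : invNum x' = invNum u' + invNum e := by omega
  have hadd2 : invNum (x' * v') = invNum x' + invNum v' := by omega
  have C1 := (invNum_add_iff u' e).mp hadd1
  have C2 := (invNum_add_iff x' v').mp hadd2
  have hblock : ∀ i j : Fin n, i < j → mu w i = mu w j → x' j < x' i := by
    intro i j hij hmu
    have he2 : e j < e i := eOf_rev w hij hmu
    exact C1 i j hij he2
  have hVI : ∀ c d : Fin n, c < d → x'⁻¹ d < x'⁻¹ c → w⁻¹ d < w⁻¹ c := by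
    intro c d hcd hx
    by_contra hcon
    push_neg at hcon
    have hne : w⁻¹ c ≠ w⁻¹ d := fun h => absurd (w⁻¹.injective h) (ne_of_lt hcd)
    have hij : w⁻¹ c < w⁻¹ d := lt_of_le_of_ne hcon hne
    have hv'c : v' (w⁻¹ c) = x'⁻¹ c := by
      apply x'.injective
      rw [Equiv.Perm.apply_inv_self, ← Equiv.Perm.mul_apply, hw, Equiv.Perm.apply_inv_self]
    have hv'd : v' (w⁻¹ d) = x'⁻¹ d := by
      apply x'.injective
      rw [Equiv.Perm.apply_inv_self, ← Equiv.Perm.mul_apply, hw, Equiv.Perm.apply_inv_self]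
    have hvlt : v' (w⁻¹ d) < v' (w⁻¹ c) := by rw [hv'c, hv'd]; exact hx
    have hC := C2 _ _ hij hvlt
    rw [hv'c, hv'd, Equiv.Perm.apply_inv_self, Equiv.Perm.apply_inv_self] at hC
    exact absurd hcd (not_lt.mpr hC.le)
  have hle : ∀ s : ℕ, ∀ i : Fin n, lev w (x' i) = s → s ≤ n - mu w i := by
    intro s
    induction s using Nat.strong_induction_on with
    | _ s ih =>
      intro i hs
      have hmun : mu w i < n := mu_lt w i
      rcases le_or_gt s 1 with h1 | h1
      · omega
      · have hlis : 2 ≤ lisFrom w (w⁻¹ (x' i)) := by rw [lev] at hs; omega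
        obtain ⟨p', hpp', hwpp', hlp'⟩ := exists_next hlis
        have hcd : x' i < w p' := by
          have h3 := hwpp'
          rwa [Equiv.Perm.apply_inv_self] at h3
        have hwinv2 : w⁻¹ (x' i) < w⁻¹ (w p') := by
          rwa [Equiv.Perm.inv_apply_self]
        have hxinv : x'⁻¹ (x' i) < x'⁻¹ (w p') := by
          rcases lt_trichotomy (x'⁻¹ (x' i)) (x'⁻¹ (w p')) with h | h | h
          · exact h
          · exfalso
            have h4 : x' i = w p' := by
              have h5 := congrArg x' h
              rwa [Equiv.Perm.apply_inv_self, Equiv.Perm.apply_inv_self] at h5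
            exact absurd h4 (ne_of_lt hcd)
          · exact absurd (hVI _ _ hcd h) (not_lt.mpr hwinv2.le)
        have hii' : i < x'⁻¹ (w p') := by rwa [Equiv.Perm.inv_apply_self] at hxinv
        have hmule : mu w i ≤ mu w (x'⁻¹ (w p')) := mu_mono w hii'.le
        have hmune : mu w i ≠ mu w (x'⁻¹ (w p')) := by
          intro heq
          have hlt := hblock i _ hii' heq
          rw [Equiv.Perm.apply_inv_self] at hlt
          exact absurd hlt (not_lt.mpr hcd.le)
        have hlev' : lev w (x' (x'⁻¹ (w p'))) = s - 1 := by
          rw [Equiv.Perm.apply_inv_self, lev, Equiv.Perm.inv_apply_self, hlp']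
          rw [lev] at hs
          omega
        have hih := ih (s - 1) (by omega) _ hlev'
        have hb := mu_lt w (x'⁻¹ (w p'))
        omega
  have hsum1 : ∑ i : Fin n, lev w (x' i) = ∑ v : Fin n, lev w v := Equiv.sum_comp x' (lev w)
  have hsum2 : ∑ i : Fin n, lev w (Phi w i) = ∑ v : Fin n, lev w v :=
    Equiv.sum_comp (Phi w) (lev w)
  have hsum : ∑ i : Fin n, lev w (x' i) = ∑ i : Fin n, (n - mu w i) := by
    rw [hsum1, ← hsum2]
    exact Finset.sum_congr rfl fun i _ => lev_phi_eq w i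
  have heqlev : ∀ i : Fin n, lev w (x' i) = n - mu w i := by
    have hpoint : ∀ i ∈ (Finset.univ : Finset (Fin n)), lev w (x' i) ≤ n - mu w i :=
      fun i _ => hle _ i rfl
    have h6 := (Finset.sum_eq_sum_iff_of_le hpoint).mp hsum
    intro i
    exact h6 i (Finset.mem_univ i)
  have hstrict : StrictMono ((fun v : Fin n => n * (n - lev w v) + (n - 1 - (v : ℕ))) ∘ ⇑x') := by
    intro i j hij
    simp only [Function.comp_apply]
    refine (keyRev_lt_iff (fun v => n - lev w v) _ _).mpr ?_
    have hi := heqlev i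
    have hj := heqlev j
    have bi := mu_lt w i
    have bj := mu_lt w j
    rcases eq_or_lt_of_le (mu_mono w hij.le) with hmu | hmu
    · exact Or.inr ⟨show n - lev w (x' i) = n - lev w (x' j) by omega, hblock i j hij hmu⟩
    · exact Or.inl (show n - lev w (x' i) < n - lev w (x' j) by omega)
  have hphi : StrictMono ((fun v : Fin n => n * (n - lev w v) + (n - 1 - (v : ℕ)))
      ∘ ⇑(Phi w)) := phi_strict w
  exact sort_uniq hstrict hphi

-- AUX END

/-- every `w` has a unique length-additive factorization
`w = u · e_{α(w)} · v`; moreover for these `u`, `v` one has `Φ(w) = u · e_{α(w)}` and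
`Φ_inv(w) = e_{α(w)} · v`. -/
theorem unique_layered_factorization (n : ℕ) (w : Equiv.Perm (Fin n)) :
    (∃! p : Equiv.Perm (Fin n) × Equiv.Perm (Fin n),
        w = p.1 * eOf (shape w) * p.2 ∧
        invNum w = invNum p.1 + invNum (eOf (shape w)) + invNum p.2) ∧
    ∀ u v : Equiv.Perm (Fin n),
      w = u * eOf (shape w) * v →
      invNum w = invNum u + invNum (eOf (shape w)) + invNum v →
      Phi w = u * eOf (shape w) ∧ PhiInv w = eOf (shape w) * v := by
  classical
  have hue : (Phi w * eOf (shape w)) * eOf (shape w) = Phi w := by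
    rw [mul_assoc, eOf_sq, mul_one]
  have hfact : w = (Phi w * eOf (shape w)) * eOf (shape w) * (eOf (shape w) * (Phi w⁻¹)⁻¹) := by
    rw [hue, phi_mul_ev]
  have hinv : invNum w = invNum (Phi w * eOf (shape w)) + invNum (eOf (shape w))
      + invNum (eOf (shape w) * (Phi w⁻¹)⁻¹) := by
    have h1 := u_additive w
    rw [hue] at h1
    have h2 := v_additive w
    rw [phi_mul_ev] at h2
    omega
  have hmain : ∀ u v : Equiv.Perm (Fin n),
      w = u * eOf (shape w) * v →
      invNum w = invNum u + invNum (eOf (shape w)) + invNum v →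
      Phi w = u * eOf (shape w) ∧ PhiInv w = eOf (shape w) * v := by
    intro u v hf hi
    have hx : u * eOf (shape w) = Phi w := factor_unique w hf hi
    refine ⟨hx.symm, ?_⟩
    have hv : v = (u * eOf (shape w))⁻¹ * w := eq_inv_mul_iff_mul_eq.mpr hf.symm
    have hv2 : v = (Phi w)⁻¹ * w := by rw [hv, hx]
    have hyinv : eOf (shape w) * ((Phi w)⁻¹ * w) = (Phi w⁻¹)⁻¹ := by
      have h := phi_mul_ev w
      have h2 : (Phi w)⁻¹ * w = eOf (shape w) * (Phi w⁻¹)⁻¹ :=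
        inv_mul_eq_iff_eq_mul.mpr h.symm
      rw [h2, ← mul_assoc, eOf_sq, one_mul]
    rw [PhiInv, hv2]
    exact hyinv.symm
  constructor
  · refine ⟨(Phi w * eOf (shape w), eOf (shape w) * (Phi w⁻¹)⁻¹), ⟨hfact, hinv⟩, ?_⟩
    rintro ⟨u, v⟩ ⟨hf, hi⟩
    obtain ⟨hPhi, hPhiInv⟩ := hmain u v hf hi
    have hu : u = Phi w * eOf (shape w) := by
      calc u = (u * eOf (shape w)) * eOf (shape w) := by rw [mul_assoc, eOf_sq, mul_one]
        _ = Phi w * eOf (shape w) := by rw [← hPhi]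
    have hveq : v = eOf (shape w) * (Phi w⁻¹)⁻¹ := by
      calc v = (eOf (shape w) * eOf (shape w)) * v := by rw [eOf_sq, one_mul]
        _ = eOf (shape w) * (eOf (shape w) * v) := by rw [mul_assoc]
        _ = eOf (shape w) * PhiInv w := by rw [← hPhiInv]
        _ = eOf (shape w) * (Phi w⁻¹)⁻¹ := rfl
    simp only [Prod.mk.injEq]
    exact ⟨hu, hveq⟩
  · exact hmain

end RajRegularity
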